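/- In a generalised voting game, suppose x_min is an O-minimal action for player i and Pr(O) ≠ 0. Then the Coleman power-to-prevent-action measure, i.e. the conditional probability that player i is criticality-δ decreasingly critical given that the outcome is O, satisfies Pr(O_DC_i^δ | {ω | W(ω) = O}) = (Pr(O) − Pr(O | x_min)) / Pr(O). -/
import Mathlib


open MeasureTheory Function

theorem stmt_11
    {ι : Type*} [Fintype ι] [Nonempty ι] [DecidableEq ι]
    {X : ι → Type*} [∀ j, MeasurableSpace (X j)]
    (μ : ∀ j, Measure (X j)) [∀ j, IsProbabilityMeasure (μ j)]
    {𝒪 : Type*} [MeasurableSpace 𝒪] [MeasurableSingletonClass 𝒪]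
    (W : (∀ j, X j) → 𝒪) (hW : Measurable W)
    (O : 𝒪) (i : ι)
    (x_min : X i)
    (hmin : ∀ ω : ∀ j, X j, W (update ω i x_min) = O →
      ∀ x : X i, W (update ω i x) = O)
    (hne : Measure.pi μ {ω | W ω = O} ≠ 0)
    :
    Measure.pi μ ({ω | W ω = O ∧ W (update ω i x_min) ≠ O} ∩ {ω | W ω = O}) /
        Measure.pi μ {ω | W ω = O} =
      (Measure.pi μ {ω | W ω = O} - Measure.pi μ {ω | W (update ω i x_min) = O}) / Measure.pi μ {ω | W ω = O} := by
  have hupd : Measurable fun ω : ∀ j, X j => update ω i x_min := by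
    apply measurable_pi_lambda
    intro j
    by_cases h : j = i
    · subst h; simp [update]
    · simpa [update, h] using measurable_pi_apply j
  have hB : MeasurableSet {ω : ∀ j, X j | W (update ω i x_min) = O} :=
    (hW.comp hupd) (measurableSet_singleton O)
  have hBA : {ω : ∀ j, X j | W (update ω i x_min) = O} ⊆ {ω | W ω = O} := by
    intro ω hω
    have := hmin ω hω (ω i)
    simpa [update_eq_self] using this
  have hset : ({ω : ∀ j, X j | W ω = O ∧ W (update ω i x_min) ≠ O} ∩ {ω | W ω = O})
      = {ω | W ω = O} \ {ω | W (update ω i x_min) = O} := by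
    ext ω; simp [Set.mem_diff, and_comm]
  rw [hset, measure_diff hBA hB.nullMeasurableSet (measure_ne_top _ _)]
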